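/- For every finite solvable group H of order m there exists a bijection β : H → C_m such that o(x) divides o(β(x)) for all x ∈ H. In particular, for any finite group L, since (C_{|L|})^r is abelian (hence solvable), there exists a bijection from (C_{|L|})^r onto C_{|L|^r} with o(x) | o(β(x)) for all x. -/

import Mathlib

open Subgroup

-- power trick: given z mapping to y of order s, with orderOf z = s * u, gcd(s,u)=1,
-- some power of z maps to y and has order exactly s.
lemma lift_order_eq {M B : Type} [Group M] [Group B] [Finite M] (φ : M →* B) (z : M) {s u : ℕ}
    (hs : orderOf (φ z) = s) (ho : orderOf z = s * u) (hu : 0 < u)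
    (hco : Nat.Coprime s u) :
    ∃ z0 : M, φ z0 = φ z ∧ orderOf z0 = s := by
  obtain ⟨c, hc1, hc2⟩ := Nat.chineseRemainder hco 1 0
  have hudvd : u ∣ c := (Nat.modEq_zero_iff_dvd).mp hc2
  have hsc : Nat.Coprime s c := by
    have h1 : Nat.gcd c s = Nat.gcd 1 s := Nat.ModEq.gcd_eq hc1
    simpa [Nat.Coprime, Nat.gcd_comm] using h1
  refine ⟨z ^ c, ?_, ?_⟩
  · rw [map_pow]
    have h2 : (φ z) ^ c = (φ z) ^ 1 := by
      rw [pow_eq_pow_iff_modEq, hs]; exact hc1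
    simpa using h2
  · have hgcd : Nat.gcd (s * u) c = u := by
      rw [Nat.Coprime.gcd_mul_left_cancel u hsc]
      exact Nat.gcd_eq_left hudvd
    rw [orderOf_pow, ho, hgcd, Nat.mul_div_cancel _ hu]

-- in a finite cyclic group, any two elements of prime order generate the same subgroup
lemma mem_zpowers_of_orderOf_eq_prime {C : Type} [Group C] [Finite C] [IsCyclic C] {p : ℕ}
    (hp : p.Prime) {a b : C} (ha : orderOf a = p) (hb : orderOf b = p) :
    a ∈ zpowers b := by
  classical
  letI := Fintype.ofFinite C
  have hS : (Finset.univ.filter fun x : C => x ^ p = 1).card ≤ p := by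
    simpa using IsCyclic.card_pow_eq_one_le (α := C) hp.pos
  have hZb : ((zpowers b : Subgroup C) : Set C).toFinset ⊆
      (Finset.univ.filter fun x : C => x ^ p = 1) := by
    intro x hx
    simp only [Set.mem_toFinset, SetLike.mem_coe] at hx
    simp only [Finset.mem_filter, Finset.mem_univ, true_and]
    exact orderOf_dvd_iff_pow_eq_one.mp (hb ▸ orderOf_dvd_of_mem_zpowers hx)
  have hcardZb : ((zpowers b : Subgroup C) : Set C).toFinset.card = p := by
    rw [Set.toFinset_card, ← Nat.card_eq_fintype_card]
    have : Nat.card ((zpowers b : Subgroup C) : Set C) = Nat.card (zpowers b) := Nat.card_congr (Equiv.refl _)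
    rw [this, Nat.card_zpowers, hb]
  have heq := Finset.eq_of_subset_of_card_le hZb (by rw [hcardZb]; exact hS)
  have hamem : a ∈ (Finset.univ.filter fun x : C => x ^ p = 1) := by
    simp only [Finset.mem_filter, Finset.mem_univ, true_and]
    rw [← ha]; exact pow_orderOf_eq_one a
  rw [← heq] at hamem
  simpa using hamem

-- fiber of a hom over φ z1 is equivalent to the kernel
def fiberEquivKer {M B : Type} [Group M] [Group B] (φ : M →* B) (z1 : M) (y : B)
    (h : φ z1 = y) : {z : M // φ z = y} ≃ φ.ker where
  toFun z := ⟨z1⁻¹ * z.1, by simp [MonoidHom.mem_ker, z.2, h]⟩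
  invFun k := ⟨z1 * k.1, by
    have := k.2
    rw [MonoidHom.mem_ker] at this
    simp [this, h]⟩
  left_inv z := by simp
  right_inv k := by simp

lemma card_fiber {M B : Type} [Group M] [Group B] (φ : M →* B) (y : B)
    (h : ∃ z1, φ z1 = y) : Nat.card {z : M // φ z = y} = Nat.card φ.ker := by
  obtain ⟨z1, hz1⟩ := h
  exact Nat.card_congr (fiberEquivKer φ z1 y hz1)

theorem ladisch : ∀ m : ℕ, ∀ (G : Type) [Group G] [Finite G], IsSolvable G → Nat.card G = m →
    ∃ β : G ≃ Multiplicative (ZMod m), ∀ x : G, orderOf x ∣ orderOf (β x) := by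
  intro m
  induction m using Nat.strong_induction_on with
  | _ m IH =>
  intro G _ _ hsolv hcard
  classical
  have hm : 0 < m := hcard ▸ Nat.card_pos
  haveI : NeZero m := ⟨hm.ne'⟩
  rcases eq_or_lt_of_le (Nat.succ_le_of_lt hm) with hm1 | hm1
  · -- m = 1 : trivial group
    haveI : Subsingleton G := by
      have h1 : Nat.card G = 1 := by omega
      obtain ⟨⟨u⟩⟩ := Nat.card_eq_one_iff_unique.mp h1
      exact ⟨u⟩
    letI : Fintype G := Fintype.ofFinite G
    have hc : Fintype.card G = Fintype.card (Multiplicative (ZMod m)) := by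
      rw [← Nat.card_eq_fintype_card, ← Nat.card_eq_fintype_card, hcard,
        Nat.card_congr Multiplicative.toAdd, Nat.card_zmod]
    refine ⟨Fintype.equivOfCardEq hc, fun x => ?_⟩
    have : x = 1 := Subsingleton.elim x 1
    simp [this]
  · -- 1 < m
    haveI : Nontrivial G := by
      rw [← Finite.one_lt_card_iff_nontrivial, hcard]; exact hm1
    -- last nontrivial term of the derived series
    have hex : ∃ n, derivedSeries G n = ⊥ := hsolv.solvable
    have hn0 : derivedSeries G (Nat.find hex) = ⊥ := Nat.find_spec hex
    have hn0pos : Nat.find hex ≠ 0 := by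
      intro h
      rw [h, derivedSeries_zero] at hn0
      exact top_ne_bot hn0
    obtain ⟨k, hk⟩ := Nat.exists_eq_succ_of_ne_zero hn0pos
    set A := derivedSeries G k with hAdef
    have hA_ne : A ≠ ⊥ := Nat.find_min hex (by omega)
    have hA_comm : ∀ x ∈ A, ∀ y ∈ A, x * y = y * x := by
      have h := hn0
      rw [hk, derivedSeries_succ] at h
      have hle := commutator_eq_bot_iff_le_centralizer.mp h
      intro x hx y hy
      exact (Subgroup.mem_centralizer_iff.mp (hle hy) x hx)
    haveI hAnormal : A.Normal := derivedSeries_normal G k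
    obtain ⟨a0, ha0A, ha0ne⟩ : ∃ a ∈ A, a ≠ 1 := by
      by_contra h
      push_neg at h
      exact hA_ne ((Subgroup.eq_bot_iff_forall A).mpr h)
    haveI : Nontrivial A := ⟨⟨⟨a0, ha0A⟩, 1, by simp [Subtype.ext_iff, ha0ne]⟩⟩
    have hcardA : 1 < Nat.card A := Finite.one_lt_card
    set p := (Nat.card A).minFac with hpdef
    have hp : p.Prime := Nat.minFac_prime hcardA.ne'
    haveI : Fact p.Prime := ⟨hp⟩
    -- N = elements of A of order dividing p
    set N : Subgroup G :=
      { carrier := {x | x ∈ A ∧ x ^ p = 1}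
        one_mem' := ⟨A.one_mem, one_pow p⟩
        mul_mem' := by
          rintro x y ⟨hxA, hxp⟩ ⟨hyA, hyp⟩
          refine ⟨A.mul_mem hxA hyA, ?_⟩
          have hcomm : Commute x y := hA_comm x hxA y hyA
          rw [hcomm.mul_pow, hxp, hyp, one_mul]
        inv_mem' := by
          rintro x ⟨hxA, hxp⟩
          exact ⟨A.inv_mem hxA, by rw [inv_pow, hxp, inv_one]⟩ } with hNdef
    have hmemN : ∀ x : G, x ∈ N ↔ x ∈ A ∧ x ^ p = 1 := fun x => Iff.rfl
    haveI hNnormal : N.Normal := by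
      constructor
      intro x hx g
      obtain ⟨hxA, hxp⟩ := hx
      refine ⟨hAnormal.conj_mem x hxA g, ?_⟩
      have : (MulAut.conj g x) ^ p = MulAut.conj g (x ^ p) := (map_pow _ _ _).symm
      simpa [MulAut.conj_apply, hxp] using this
    have hNexp : ∀ x ∈ N, x ^ p = 1 := fun x hx => hx.2
    -- N is a nontrivial p-group
    have hpA : p ∣ Nat.card A := hpdef ▸ Nat.minFac_dvd _
    obtain ⟨aa, haa⟩ := exists_prime_orderOf_dvd_card' (G := A) p hpA
    have haamem : (aa : G) ∈ N := by
      refine ⟨aa.2, ?_⟩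
      have : aa ^ p = 1 := by rw [← haa]; exact pow_orderOf_eq_one aa
      have h2 := congrArg (Subtype.val) this
      simpa using h2
    have haane : (aa : G) ≠ 1 := by
      intro h
      have : aa = 1 := Subtype.ext h
      rw [this, orderOf_one] at haa
      exact hp.one_lt.ne' haa.symm
    haveI : Nontrivial N := ⟨⟨⟨aa, haamem⟩, 1, by simp [Subtype.ext_iff, haane]⟩⟩
    obtain ⟨q, hqdef⟩ : ∃ x, Nat.card N = x := ⟨_, rfl⟩
    have hq1 : 1 < q := hqdef ▸ Finite.one_lt_card
    have hNpgroup : IsPGroup p N := by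
      intro x
      refine ⟨1, ?_⟩
      have := x.2.2
      ext
      simpa [pow_one] using this
    obtain ⟨kq, hqk⟩ := hNpgroup.exists_card_eq
    rw [hqdef] at hqk
    have hkq : kq ≠ 0 := by
      rintro rfl
      rw [hqk] at hq1
      simp at hq1
    have hpq : p ∣ q := hqk ▸ dvd_pow_self p hkq
    -- quotient
    obtain ⟨m', hm'def⟩ : ∃ x, Nat.card (G ⧸ N) = x := ⟨_, rfl⟩
    have hprod : m = m' * q := by
      rw [← hcard, ← hqdef, ← hm'def]
      exact Subgroup.card_eq_card_quotient_mul_card_subgroup N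
    have hm'pos : 0 < m' := hm'def ▸ Nat.card_pos
    have hm'lt : m' < m := by
      rw [hprod]
      exact (Nat.lt_mul_iff_one_lt_right hm'pos).mpr hq1
    have hdvd : m' ∣ m := ⟨q, hprod⟩
    obtain ⟨β', hβ'⟩ := IH m' hm'lt (G ⧸ N) (by haveI : Group.IsSolvable G := hsolv; exact Group.isSolvable_of_surjective (f := QuotientGroup.mk' N) (QuotientGroup.mk'_surjective N)) hm'def
    haveI : NeZero m' := ⟨hm'pos.ne'⟩
    -- the cyclic side
    set ψ : Multiplicative (ZMod m) →* Multiplicative (ZMod m') :=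
      AddMonoidHom.toMultiplicative ((ZMod.castHom hdvd (ZMod m')).toAddMonoidHom) with hψdef
    have hψsurj : Function.Surjective ψ := by
      intro y
      refine ⟨Multiplicative.ofAdd ((Multiplicative.toAdd y).val : ZMod m), ?_⟩
      have h1 : (ZMod.castHom hdvd (ZMod m')) (((Multiplicative.toAdd y).val : ℕ) : ZMod m)
          = Multiplicative.toAdd y := by
        rw [map_natCast]
        exact ZMod.natCast_rightInverse _
      simpa [hψdef] using congrArg Multiplicative.ofAdd h1
    have hCcard : Nat.card (Multiplicative (ZMod m)) = m := by
      rw [Nat.card_congr Multiplicative.toAdd, Nat.card_zmod]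
    have hC'card : Nat.card (Multiplicative (ZMod m')) = m' := by
      rw [Nat.card_congr Multiplicative.toAdd, Nat.card_zmod]
    have hkerψ : Nat.card ψ.ker = q := by
      have h1 : Nat.card (Multiplicative (ZMod m)) =
          Nat.card ((Multiplicative (ZMod m)) ⧸ ψ.ker) * Nat.card ψ.ker :=
        Subgroup.card_eq_card_quotient_mul_card_subgroup _
      have h2 : Nat.card ((Multiplicative (ZMod m)) ⧸ ψ.ker) = m' := by
        rw [Nat.card_congr (QuotientGroup.quotientKerEquivOfSurjective ψ hψsurj).toEquiv, hC'card]
      rw [hCcard, h2] at h1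
      exact (Nat.eq_of_mul_eq_mul_left hm'pos (h1.symm.trans hprod))
    set π : G →* G ⧸ N := QuotientGroup.mk' N with hπdef
    -- order divisibility facts
    have hGdvd2 : ∀ g : G, orderOf g ∣ orderOf (π g) * p := by
      intro g
      apply orderOf_dvd_of_pow_eq_one
      rw [pow_mul]
      apply hNexp
      have h1 : π (g ^ orderOf (π g)) = 1 := by rw [map_pow, pow_orderOf_eq_one]
      have h2 : g ^ orderOf (π g) ∈ π.ker := h1
      rwa [hπdef, QuotientGroup.ker_mk'] at h2
    have hCdvd2 : ∀ z, orderOf z ∣ orderOf (ψ z) * q := by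
      intro z
      apply orderOf_dvd_of_pow_eq_one
      rw [pow_mul]
      have h2 : z ^ orderOf (ψ z) ∈ ψ.ker := by
        rw [MonoidHom.mem_ker, map_pow, pow_orderOf_eq_one]
      have h3 : orderOf (z ^ orderOf (ψ z)) ∣ q := hkerψ ▸ Subgroup.orderOf_dvd_natCard ψ.ker h2
      exact orderOf_dvd_iff_pow_eq_one.mp h3
    have hsqcop : ∀ s : ℕ, ¬ p ∣ s → Nat.Coprime s q := by
      intro s hps
      have hcsp : Nat.Coprime p s := (Nat.Prime.coprime_iff_not_dvd hp).mpr hps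
      rw [hqk]
      exact (Nat.coprime_comm.mp hcsp).pow_right kq
    have hfibGcard0 : Nat.card N = q := hqdef
    -- main counting fact on the cyclic side
    have hfactA : ∀ z : Multiplicative (ZMod m), p ∣ orderOf (ψ z) →
        orderOf (ψ z) * p ∣ orderOf z := by
      intro z hps
      set s := orderOf (ψ z) with hsdef
      set n := orderOf z with hndef
      have hspos : 0 < s := orderOf_pos _
      have hsn : s ∣ n := orderOf_map_dvd ψ z
      obtain ⟨u, hu⟩ := hsn
      have huq : u ∣ q := by
        have h1 : n ∣ s * q := hCdvd2 z
        rw [hu] at h1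
        exact (mul_dvd_mul_iff_left hspos.ne').mp h1
      have hpu : p ∣ u := by
        by_contra hpu
        have hu1 : u = 1 := (hsqcop u hpu).eq_one_of_dvd huq
        have hns : n = s := by rw [hu, hu1, mul_one]
        have hsp_dvd : s / p ∣ s := Nat.div_dvd_of_dvd hps
        have hordza : orderOf (z ^ (s / p)) = p := by
          rw [orderOf_pow, ← hndef, hns, Nat.gcd_eq_right hsp_dvd, Nat.div_div_self hps hspos.ne']
        obtain ⟨b, hb⟩ := exists_prime_orderOf_dvd_card' (G := ψ.ker) p (hkerψ ▸ hpq)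
        have hbord : orderOf ((b : Multiplicative (ZMod m))) = p := by
          rw [orderOf_coe]; exact hb
        have hmem := mem_zpowers_of_orderOf_eq_prime hp hordza hbord
        have hker : z ^ (s / p) ∈ ψ.ker := zpowers_le.mpr b.2 hmem
        rw [MonoidHom.mem_ker, map_pow] at hker
        have hord2 : orderOf ((ψ z) ^ (s / p)) = p := by
          rw [orderOf_pow, ← hsdef, Nat.gcd_eq_right hsp_dvd, Nat.div_div_self hps hspos.ne']
        rw [hker, orderOf_one] at hord2
        exact hp.one_lt.ne' hord2.symm
      rw [hu]
      exact Nat.mul_dvd_mul_left s hpu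
    -- fiberwise equivalences
    have hF : ∀ gq : G ⧸ N,
        ∃ e : {g : G // π g = gq} ≃ {z : Multiplicative (ZMod m) // ψ z = β' gq},
        ∀ gg, orderOf gg.1 ∣ orderOf (e gg).1 := by
      intro gq
      set t := orderOf gq with htdef
      set y := β' gq with hydef
      set s := orderOf y with hsdef
      have hts : t ∣ s := hβ' gq
      have hπsurj : Function.Surjective π := QuotientGroup.mk'_surjective N
      have hfibGcard : Nat.card {g : G // π g = gq} = q := by
        rw [card_fiber π gq (hπsurj gq), hπdef, QuotientGroup.ker_mk', hqdef]
      have hfibCcard : Nat.card {z // ψ z = y} = q := by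
        rw [card_fiber ψ y (hψsurj y), hkerψ]
      letI : Fintype {g : G // π g = gq} := Fintype.ofFinite _
      letI : Fintype {z : Multiplicative (ZMod m) // ψ z = y} := Fintype.ofFinite _
      have hcards : Fintype.card {g : G // π g = gq}
          = Fintype.card {z : Multiplicative (ZMod m) // ψ z = y} := by
        rw [← Nat.card_eq_fintype_card, ← Nat.card_eq_fintype_card, hfibGcard, hfibCcard]
      have e0 : {g : G // π g = gq} ≃ {z : Multiplicative (ZMod m) // ψ z = y} :=
        Fintype.equivOfCardEq hcards
      have hfibord : ∀ gg : {g : G // π g = gq}, orderOf gg.1 ∣ t * p := by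
        intro gg
        have := hGdvd2 gg.1
        rwa [gg.2] at this
      by_cases hps : p ∣ s
      · refine ⟨e0, fun gg => ?_⟩
        have h1 : orderOf gg.1 ∣ s * p := (hfibord gg).trans (Nat.mul_dvd_mul_right hts p)
        have h2 : s * p ∣ orderOf (e0 gg).1 := by
          have h3 := hfactA (e0 gg).1 (by rw [(e0 gg).2, ← hsdef]; exact hps)
          rwa [(e0 gg).2, ← hsdef] at h3
        exact h1.trans h2
      · -- p ∤ s
        have hpt : ¬ p ∣ t := fun h => hps (h.trans hts)
        have hspos : 0 < s := orderOf_pos y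
        have htpos : 0 < t := orderOf_pos gq
        -- a canonical lift z0 of y of order s
        obtain ⟨z1, hz1⟩ := hψsurj y
        have hsz1 : orderOf (ψ z1) = s := by rw [hz1]
        obtain ⟨u1, hu1⟩ : s ∣ orderOf z1 := by
          have := orderOf_map_dvd ψ z1
          rwa [hz1] at this
        have hu1q : u1 ∣ q := by
          have h1 := hCdvd2 z1
          rw [hu1, hz1] at h1
          exact (mul_dvd_mul_iff_left hspos.ne').mp h1
        have hu1pos : 0 < u1 := by
          rcases Nat.eq_zero_or_pos u1 with h | h
          · exfalso
            rw [h, mul_zero] at hu1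
            exact (orderOf_pos z1).ne' hu1
          · exact h
        have hcosu : Nat.Coprime s u1 := (hsqcop s hps).coprime_dvd_right hu1q
        obtain ⟨z0, hz0y, hz0ord⟩ := lift_order_eq ψ z1 hsz1 hu1 hu1pos hcosu
        rw [hz1] at hz0y
        have huniq : ∀ z : Multiplicative (ZMod m), ψ z = y → orderOf z = s → z = z0 := by
          intro z hzy hzord
          have hwker : z * z0⁻¹ ∈ ψ.ker := by
            rw [MonoidHom.mem_ker, map_mul, map_inv, hzy, hz0y, mul_inv_cancel]
          have h1 : orderOf (z * z0⁻¹) ∣ q := hkerψ ▸ Subgroup.orderOf_dvd_natCard ψ.ker hwker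
          have h2 : orderOf (z * z0⁻¹) ∣ s := by
            have h3 := (Commute.all z z0⁻¹).orderOf_mul_dvd_lcm
            rwa [hzord, orderOf_inv, hz0ord, Nat.lcm_self] at h3
          have h4 : orderOf (z * z0⁻¹) = 1 :=
            Nat.eq_one_of_dvd_coprimes (hsqcop s hps) h2 h1
          have h5 := orderOf_eq_one_iff.mp h4
          rwa [mul_inv_eq_one] at h5
        -- a canonical lift g0 of gq of order t
        obtain ⟨g1, hg1⟩ := hπsurj gq
        have hst1 : orderOf (π g1) = t := by rw [hg1]
        obtain ⟨v1, hv1⟩ : t ∣ orderOf g1 := by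
          have := orderOf_map_dvd π g1
          rwa [hg1] at this
        have hv1p : v1 ∣ p := by
          have h1 := hGdvd2 g1
          rw [hv1, hg1] at h1
          exact (mul_dvd_mul_iff_left htpos.ne').mp h1
        have hv1pos : 0 < v1 := by
          rcases Nat.eq_zero_or_pos v1 with h | h
          · exfalso
            rw [h, mul_zero] at hv1
            exact (orderOf_pos g1).ne' hv1
          · exact h
        have hcotv : Nat.Coprime t v1 :=
          (Nat.coprime_comm.mp ((Nat.Prime.coprime_iff_not_dvd hp).mpr hpt)).coprime_dvd_right hv1p
        obtain ⟨g0, hg0gq, hg0ord⟩ := lift_order_eq π g1 hst1 hv1 hv1pos hcotv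
        rw [hg1] at hg0gq
        set gg0 : {g : G // π g = gq} := ⟨g0, hg0gq⟩ with hgg0def
        set zz0 : {z : Multiplicative (ZMod m) // ψ z = y} := ⟨z0, hz0y⟩ with hzz0def
        refine ⟨e0.trans (Equiv.swap (e0 gg0) zz0), fun gg => ?_⟩
        by_cases hgg : gg = gg0
        · rw [hgg]
          simp only [Equiv.trans_apply, Equiv.swap_apply_left]
          simpa [hgg0def, hzz0def, hg0ord, hz0ord] using hts
        · have hne : (e0.trans (Equiv.swap (e0 gg0) zz0)) gg ≠ zz0 := by
            intro h
            apply hgg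
            apply (e0.trans (Equiv.swap (e0 gg0) zz0)).injective
            rw [h]
            simp only [Equiv.trans_apply, Equiv.swap_apply_left]
          set z := ((e0.trans (Equiv.swap (e0 gg0) zz0)) gg) with hzdef
          have hzy : ψ z.1 = y := z.2
          obtain ⟨u, hu⟩ : s ∣ orderOf z.1 := by
            have := orderOf_map_dvd ψ z.1
            rwa [hzy] at this
          have huq : u ∣ q := by
            have h1 := hCdvd2 z.1
            rw [hu, hzy] at h1
            exact (mul_dvd_mul_iff_left hspos.ne').mp h1
          have hpu : p ∣ u := by
            by_contra hpu
            have hu1 : u = 1 := (hsqcop u hpu).eq_one_of_dvd huq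
            exact hne (Subtype.ext (huniq z.1 hzy (by rw [hu, hu1, mul_one])))
          calc orderOf gg.1 ∣ t * p := hfibord gg
            _ ∣ s * p := Nat.mul_dvd_mul_right hts p
            _ ∣ s * u := Nat.mul_dvd_mul_left s hpu
            _ = orderOf z.1 := hu.symm
    choose F hFspec using hF
    refine ⟨((Equiv.sigmaFiberEquiv (⇑π : G → G ⧸ N)).symm.trans
      ((Equiv.sigmaCongr β' F).trans
        (Equiv.sigmaFiberEquiv (⇑ψ : Multiplicative (ZMod m) → Multiplicative (ZMod m'))))),
      fun x => ?_⟩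
    exact hFspec (π x) ⟨x, rfl⟩


lemma zmod_zero_orderOf_eq_zero (x : Multiplicative (ZMod 0)) (h : x ≠ 1) : orderOf x = 0 := by
  by_contra hn
  have h1 := pow_orderOf_eq_one x
  have h2 : (orderOf x : ZMod 0) * (Multiplicative.toAdd x) = 0 := by
    have h3 := congrArg Multiplicative.toAdd h1
    rw [toAdd_pow] at h3
    simpa [nsmul_eq_mul] using h3
  haveI : NoZeroDivisors (ZMod 0) := (inferInstance : NoZeroDivisors ℤ)
  haveI : CharZero (ZMod 0) := inferInstance
  rcases mul_eq_zero.mp h2 with h3 | h3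
  · exact hn (by exact_mod_cast h3)
  · exact h (by simpa using congrArg Multiplicative.ofAdd (h3 : Multiplicative.toAdd x = 0))

/-- Ladisch's theorem: every finite solvable group `H` of order `m` admits a bijection
`β : H → C_m` with `o(x) ∣ o(β(x))`; in particular, for any `d, r`, the abelian group
`(C_d)^r` admits such a bijection onto `C_{d^r}`. -/
theorem stmt7 :
    (∀ (H : Type) [Group H] [Fintype H], IsSolvable H →
      ∃ β : H ≃ Multiplicative (ZMod (Nat.card H)),
        ∀ x : H, orderOf x ∣ orderOf (β x)) ∧
    (∀ d r : ℕ,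
      ∃ β : (Fin r → Multiplicative (ZMod d)) ≃ Multiplicative (ZMod (d ^ r)),
        ∀ a : Fin r → Multiplicative (ZMod d), orderOf a ∣ orderOf (β a)) := by
  constructor
  · intro H _ _ hs
    exact ladisch (Nat.card H) H hs rfl
  · intro d r
    by_cases hd : d = 0
    · subst hd
      by_cases hr : r = 0
      · subst hr
        haveI : Finite (Fin 0 → Multiplicative (ZMod 0)) := Finite.of_subsingleton
        exact ladisch (0 ^ 0) _ (isSolvable_of_comm mul_comm) (by simp [Nat.card_unique])
      · haveI : Countable (Multiplicative (ZMod 0)) := (inferInstance : Countable ℤ)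
        haveI : Nonempty (Fin r) := ⟨⟨0, Nat.pos_of_ne_zero hr⟩⟩
        rw [zero_pow hr]
        obtain ⟨D1⟩ := nonempty_denumerable (Fin r → Multiplicative (ZMod 0))
        obtain ⟨D2⟩ := nonempty_denumerable (Multiplicative (ZMod 0))
        have e : (Fin r → Multiplicative (ZMod 0)) ≃ Multiplicative (ZMod 0) :=
          (D1.eqv _).trans (D2.eqv _).symm
        refine ⟨e.trans (Equiv.swap (e 1) 1), fun a => ?_⟩
        by_cases ha : a = 1
        · subst ha; simp
        · have h1 : (e.trans (Equiv.swap (e 1) 1)) a ≠ 1 := by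
            intro h
            apply ha
            apply (e.trans (Equiv.swap (e 1) 1)).injective
            rw [h]
            simp [Equiv.swap_apply_left]
          rw [zmod_zero_orderOf_eq_zero _ h1]
          exact dvd_zero _
    · haveI : NeZero d := ⟨hd⟩
      have hcard : Nat.card (Fin r → Multiplicative (ZMod d)) = d ^ r := by
        rw [Nat.card_pi]
        simp [Nat.card_congr Multiplicative.toAdd, Nat.card_zmod]
      exact ladisch (d ^ r) _ (isSolvable_of_comm mul_comm) hcard
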